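/- arXiv:2205.11035 — 3 statements merged into one kernel-verified Lean document; each statement's English description precedes it below -/
import Mathlib

section
/- Let $d\geq 2$, $\alpha\in(0,2)$. Then for all $t>0$ and $x^1\neq 0$, $\int_0^\infty \frac{t\,|x^1|^{d-1}\,s^{d-2}}{(t^{1/\alpha}+|x^1|(1+s^2)^{1/2})^{d+\alpha}}\,ds \;\approx\; t^{-1/\alpha}\wedge\frac{t}{|x^1|^{1+\alpha}}$, with implicit constants depending only on $d,\alpha$. -/
open MeasureTheory Real Set Filter

noncomputable def gg (d : ℕ) (α : ℝ) (u : ℝ) : ℝ := u ^ (d - 2) / (1 + u) ^ ((d:ℝ) + α)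

noncomputable def KK (d : ℕ) (α : ℝ) : ℝ := ∫ u in Ioi (0:ℝ), gg d α u

lemma gg_integrable (d : ℕ) (hd : 2 ≤ d) {α : ℝ} (hα : 0 < α) :
    IntegrableOn (gg d α) (Ioi 0) := by
  have hp : (0:ℝ) < (d:ℝ) + α := by positivity
  have h01 : IntegrableOn (gg d α) (Ioc 0 1) := by
    have hc : ContinuousOn (gg d α) (Icc 0 1) := by
      apply ContinuousOn.div
      · exact (continuous_pow _).continuousOn
      · exact ((continuous_const.add continuous_id).rpow_const
          (fun x => Or.inr hp.le)).continuousOn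
      · intro x hx
        exact ne_of_gt (rpow_pos_of_pos (by linarith [hx.1]) _)
    exact (hc.integrableOn_Icc).mono_set Ioc_subset_Icc_self
  have h1i : IntegrableOn (gg d α) (Ioi 1) := by
    have hmeas : AEStronglyMeasurable (gg d α) (volume.restrict (Ioi 1)) := by
      apply ContinuousOn.aestronglyMeasurable _ measurableSet_Ioi
      apply ContinuousOn.div
      · exact (continuous_pow _).continuousOn
      · exact ((continuous_const.add continuous_id).rpow_const
          (fun x => Or.inr hp.le)).continuousOn
      · intro x hx
        exact ne_of_gt (rpow_pos_of_pos (by linarith [mem_Ioi.mp hx]) _)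
    refine (integrableOn_Ioi_rpow_of_lt (show (-2 - α) < -1 by linarith) one_pos).mono'
      hmeas ?_
    filter_upwards [ae_restrict_mem measurableSet_Ioi] with u hu
    have hu0 : (0:ℝ) < u := lt_trans one_pos hu
    have hgnn : 0 ≤ gg d α u := by
      unfold gg; positivity
    rw [Real.norm_of_nonneg hgnn]
    have h1 : u ^ ((d:ℝ) + α) ≤ (1 + u) ^ ((d:ℝ) + α) :=
      rpow_le_rpow hu0.le (by linarith) hp.le
    have h2 : gg d α u ≤ u ^ (d - 2) / u ^ ((d:ℝ) + α) := by
      unfold gg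
      apply div_le_div_of_nonneg_left (by positivity) (rpow_pos_of_pos hu0 _) h1
    refine h2.trans (le_of_eq ?_)
    rw [← Real.rpow_natCast u (d - 2), ← Real.rpow_sub hu0]
    congr 1
    have : ((d - 2 : ℕ) : ℝ) = (d:ℝ) - 2 := by
      have := Nat.cast_sub hd (R := ℝ); simpa using this
    rw [this]; ring
  have : Ioc (0:ℝ) 1 ∪ Ioi 1 = Ioi 0 := Ioc_union_Ioi_eq_Ioi zero_le_one
  rw [← this]
  exact h01.union h1i

lemma KK_pos (d : ℕ) (hd : 2 ≤ d) {α : ℝ} (hα : 0 < α) : 0 < KK d α := by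
  rw [KK, setIntegral_pos_iff_support_of_nonneg_ae]
  · have hsub : Ioi (0:ℝ) ⊆ Function.support (gg d α) := by
      intro u hu
      have hu0 : (0:ℝ) < u := hu
      have : 0 < gg d α u := by unfold gg; positivity
      exact ne_of_gt this
    have : Function.support (gg d α) ∩ Ioi 0 = Ioi 0 := by
      rw [inter_eq_right]; exact hsub
    rw [this]
    simp [Real.volume_Ioi]
  · filter_upwards [ae_restrict_mem measurableSet_Ioi] with u hu
    have hu0 : (0:ℝ) < u := hu
    unfold gg; positivity
  · exact gg_integrable d hd hα

lemma int_eval (d : ℕ) (hd : 2 ≤ d) {α A B : ℝ} (hα : 0 < α) (hA : 0 < A) (hB : 0 < B) :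
    IntegrableOn (fun s : ℝ => s ^ (d - 2) / (A + B * s) ^ ((d:ℝ) + α)) (Ioi 0) ∧
    ∫ s in Ioi (0:ℝ), s ^ (d - 2) / (A + B * s) ^ ((d:ℝ) + α)
      = KK d α * A ^ (-(1:ℝ) - α) / B ^ (d - 1) := by
  have hp : (0:ℝ) < (d:ℝ) + α := by positivity
  set c : ℝ := B / A with hc_def
  have hc : 0 < c := div_pos hB hA
  have key : ∀ s ∈ Ioi (0:ℝ), s ^ (d - 2) / (A + B * s) ^ ((d:ℝ) + α)
      = (A ^ (-((d:ℝ) + α)) / c ^ (d - 2)) * gg d α (c * s) := by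
    intro s hs
    have hs0 : (0:ℝ) < s := hs
    have h1 : A + B * s = A * (1 + c * s) := by
      rw [hc_def]; field_simp
    have h2 : (A * (1 + c * s)) ^ ((d:ℝ) + α)
        = A ^ ((d:ℝ) + α) * (1 + c * s) ^ ((d:ℝ) + α) :=
      Real.mul_rpow hA.le (by positivity)
    have h3 : (0:ℝ) < (1 + c * s) ^ ((d:ℝ) + α) := rpow_pos_of_pos (by positivity) _
    have h4 : (0:ℝ) < A ^ ((d:ℝ) + α) := rpow_pos_of_pos hA _
    rw [h1, h2]
    unfold gg
    rw [mul_pow, Real.rpow_neg hA.le]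
    field_simp
  have hcomp : IntegrableOn (fun s => gg d α (c * s)) (Ioi 0) := by
    have := (integrableOn_Ioi_comp_mul_left_iff (gg d α) 0 hc).mpr
    simpa using this (by simpa using gg_integrable d hd hα)
  constructor
  · refine (IntegrableOn.congr_fun ?_ (fun s hs => (key s hs).symm) measurableSet_Ioi)
    exact hcomp.const_mul _
  · rw [setIntegral_congr_fun measurableSet_Ioi key, integral_const_mul,
      integral_comp_mul_left_Ioi (gg d α) 0 hc]
    simp only [mul_zero, smul_eq_mul]
    rw [← KK]
    have hcpow : (c:ℝ) ^ (d - 2) * c = c ^ (d - 1) := by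
      rw [← pow_succ]; congr 1; omega
    have hAd : A ^ (-((d:ℝ) + α)) * A ^ ((d:ℝ) - 1) = A ^ (-(1:ℝ) - α) := by
      rw [← Real.rpow_add hA]; ring_nf
    have hcd : c ^ (d - 1) = B ^ (d - 1) / A ^ (d - 1) := by
      rw [hc_def, div_pow]
    have hAnat : (A:ℝ) ^ ((d:ℝ) - 1) = A ^ (d - 1 : ℕ) := by
      rw [← Real.rpow_natCast A (d - 1)]
      congr 1
      have := Nat.cast_sub (le_trans one_le_two hd) (R := ℝ) (m := 1) (n := d)
      simpa using this.symm
    have hBpos : (0:ℝ) < B ^ (d - 1) := by positivity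
    have hApos : (0:ℝ) < A ^ (d - 1 : ℕ) := by positivity
    rw [← hAd, hAnat]
    field_simp
    rw [hcpow, hcd]
    field_simp

set_option maxHeartbeats 1000000 in
/-- for `d ≥ 2`, `α ∈ (0,2)`, `t > 0`, `x¹ ≠ 0`,
`∫_0^∞ t|x¹|^{d-1} s^{d-2} / (t^{1/α}+|x¹|(1+s²)^{1/2})^{d+α} ds ≈ t^{-1/α} ∧ t/|x¹|^{1+α}`,
with implicit constants depending only on `d, α`. -/
theorem stmt2 (d : ℕ) (hd : 2 ≤ d) (α : ℝ) (hα : α ∈ Set.Ioo (0 : ℝ) 2) :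
    ∃ C : ℝ, 0 < C ∧
      ∀ t : ℝ, 0 < t → ∀ x1 : ℝ, x1 ≠ 0 →
        C⁻¹ * min (t ^ (-1 / α)) (t / |x1| ^ ((1 : ℝ) + α)) ≤
            (∫ s in Set.Ioi (0 : ℝ),
              t * |x1| ^ (d - 1) * s ^ (d - 2) /
                (t ^ (1 / α) + |x1| * Real.sqrt (1 + s ^ 2)) ^ ((d : ℝ) + α)) ∧
          (∫ s in Set.Ioi (0 : ℝ),
              t * |x1| ^ (d - 1) * s ^ (d - 2) /
                (t ^ (1 / α) + |x1| * Real.sqrt (1 + s ^ 2)) ^ ((d : ℝ) + α)) ≤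
            C * min (t ^ (-1 / α)) (t / |x1| ^ ((1 : ℝ) + α)) := by
  obtain ⟨hα0, hα2⟩ := hα
  have hK : 0 < KK d α := KK_pos d hd hα0
  set p : ℝ := (d:ℝ) + α with hpdef
  have hp0 : 0 < p := by positivity
  have h2p : (0:ℝ) < 2 ^ p := rpow_pos_of_pos two_pos _
  refine ⟨2 ^ p * max (KK d α) (KK d α)⁻¹, by positivity, ?_⟩
  intro t ht x1 hx
  set r : ℝ := |x1| with hrdef
  have hr0 : 0 < r := abs_pos.mpr hx
  set T : ℝ := t ^ (1/α) with hTdef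
  have hT0 : 0 < T := rpow_pos_of_pos ht _
  set M : ℝ := max T r with hMdef
  have hM0 : 0 < M := lt_max_of_lt_left hT0
  obtain ⟨hint, hval⟩ := int_eval d hd (A := M) (B := r) hα0 hM0 hr0
  have hrd : (0:ℝ) < r ^ (d - 1) := by positivity
  -- the integrand and the comparison function
  set f : ℝ → ℝ := fun s =>
    t * r ^ (d - 1) * s ^ (d - 2) / (T + r * Real.sqrt (1 + s ^ 2)) ^ p with hfdef
  -- pointwise sqrt estimates
  have hsqrt : ∀ s : ℝ, 0 < s →
      (M + r * s ≤ 2 * (T + r * Real.sqrt (1 + s ^ 2)) ∧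
       T + r * Real.sqrt (1 + s ^ 2) ≤ 2 * (M + r * s)) := by
    intro s hs
    have h1 : (1:ℝ) ≤ Real.sqrt (1 + s ^ 2) := by
      have := Real.sqrt_le_sqrt (show (1:ℝ) ≤ 1 + s ^ 2 by nlinarith)
      simpa using this
    have h2 : s ≤ Real.sqrt (1 + s ^ 2) := by
      have := Real.sqrt_le_sqrt (show s ^ 2 ≤ 1 + s ^ 2 by nlinarith)
      rwa [Real.sqrt_sq hs.le] at this
    have h3 : Real.sqrt (1 + s ^ 2) ≤ 1 + s := by
      have := Real.sqrt_le_sqrt (show (1:ℝ) + s ^ 2 ≤ (1 + s) ^ 2 by nlinarith)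
      rwa [Real.sqrt_sq (by linarith)] at this
    have hMle : M ≤ T + r := max_le (by linarith) (by linarith)
    have hTM : T ≤ M := le_max_left _ _
    have hrM : r ≤ M := le_max_right _ _
    constructor
    · nlinarith [mul_le_mul_of_nonneg_left h1 hr0.le, mul_le_mul_of_nonneg_left h2 hr0.le]
    · nlinarith [mul_le_mul_of_nonneg_left h3 hr0.le]
  -- pointwise bounds for f
  have hub : ∀ s ∈ Ioi (0:ℝ), f s ≤
      (2 ^ p * (t * r ^ (d - 1))) * (s ^ (d - 2) / (M + r * s) ^ p) := by
    intro s hs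
    have hs0 : (0:ℝ) < s := hs
    obtain ⟨hE2D, _⟩ := hsqrt s hs0
    set D : ℝ := T + r * Real.sqrt (1 + s ^ 2) with hDdef
    set E : ℝ := M + r * s with hEdef
    have hE0 : 0 < E := by positivity
    have hD0 : 0 < D := by
      have : (0:ℝ) ≤ r * Real.sqrt (1 + s ^ 2) := by positivity
      linarith
    have hEp : (0:ℝ) < E ^ p := rpow_pos_of_pos hE0 _
    have hDp : E ^ p / 2 ^ p ≤ D ^ p := by
      rw [← Real.div_rpow hE0.le (by norm_num : (0:ℝ) ≤ 2)]
      exact Real.rpow_le_rpow (by positivity) (by linarith) hp0.le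
    have hN : (0:ℝ) ≤ t * r ^ (d - 1) * s ^ (d - 2) := by positivity
    have key : f s ≤ t * r ^ (d - 1) * s ^ (d - 2) / (E ^ p / 2 ^ p) :=
      div_le_div_of_nonneg_left hN (by positivity) hDp
    refine key.trans (le_of_eq ?_)
    field_simp
  have hlb : ∀ s ∈ Ioi (0:ℝ),
      ((2 ^ p)⁻¹ * (t * r ^ (d - 1))) * (s ^ (d - 2) / (M + r * s) ^ p) ≤ f s := by
    intro s hs
    have hs0 : (0:ℝ) < s := hs
    obtain ⟨_, hD2E⟩ := hsqrt s hs0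
    set D : ℝ := T + r * Real.sqrt (1 + s ^ 2) with hDdef
    set E : ℝ := M + r * s with hEdef
    have hE0 : 0 < E := by positivity
    have hD0 : 0 < D := by
      have : (0:ℝ) ≤ r * Real.sqrt (1 + s ^ 2) := by positivity
      linarith
    have hEp : (0:ℝ) < E ^ p := rpow_pos_of_pos hE0 _
    have hDp : D ^ p ≤ 2 ^ p * E ^ p := by
      rw [← Real.mul_rpow (by norm_num : (0:ℝ) ≤ 2) hE0.le]
      exact Real.rpow_le_rpow hD0.le (by linarith) hp0.le
    have hN : (0:ℝ) ≤ t * r ^ (d - 1) * s ^ (d - 2) := by positivity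
    have key : t * r ^ (d - 1) * s ^ (d - 2) / (2 ^ p * E ^ p) ≤ f s :=
      div_le_div_of_nonneg_left hN (rpow_pos_of_pos hD0 _) hDp
    refine (le_of_eq ?_).trans key
    field_simp
  -- integrability of f
  have hf_cont : Continuous f := by
    apply Continuous.div
    · exact ((continuous_const.mul continuous_const).mul (continuous_pow _))
    · apply Continuous.rpow_const
      · exact continuous_const.add (continuous_const.mul
          ((continuous_const.add (continuous_pow 2)).sqrt))
      · exact fun x => Or.inr hp0.le
    · intro x
      have h1 : (1:ℝ) ≤ Real.sqrt (1 + x ^ 2) := by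
        have := Real.sqrt_le_sqrt (show (1:ℝ) ≤ 1 + x ^ 2 by nlinarith)
        simpa using this
      have : 0 < T + r * Real.sqrt (1 + x ^ 2) := by nlinarith
      exact ne_of_gt (rpow_pos_of_pos this _)
  have hbub : IntegrableOn
      (fun s => (2 ^ p * (t * r ^ (d - 1))) * (s ^ (d - 2) / (M + r * s) ^ p))
      (Ioi 0) := hint.const_mul _
  have hblb : IntegrableOn
      (fun s => ((2 ^ p)⁻¹ * (t * r ^ (d - 1))) * (s ^ (d - 2) / (M + r * s) ^ p))
      (Ioi 0) := hint.const_mul _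
  have hf_int : IntegrableOn f (Ioi 0) := by
    refine hbub.mono' (hf_cont.aestronglyMeasurable.restrict) ?_
    filter_upwards [ae_restrict_mem measurableSet_Ioi] with s hs
    have hs0 : (0:ℝ) < s := hs
    have hfnn : 0 ≤ f s := by
      have h1 : (1:ℝ) ≤ Real.sqrt (1 + s ^ 2) := by
        have := Real.sqrt_le_sqrt (show (1:ℝ) ≤ 1 + s ^ 2 by nlinarith)
        simpa using this
      have hD : 0 < T + r * Real.sqrt (1 + s ^ 2) := by nlinarith
      show (0:ℝ) ≤ t * r ^ (d - 1) * s ^ (d - 2) / (T + r * Real.sqrt (1 + s ^ 2)) ^ p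
      positivity
    rw [Real.norm_of_nonneg hfnn]
    exact hub s hs
  -- value of comparison integrals
  have hvalc : ∀ c : ℝ, ∫ s in Ioi (0:ℝ), c * (s ^ (d - 2) / (M + r * s) ^ p)
      = c * (KK d α * M ^ (-(1:ℝ) - α) / r ^ (d - 1)) := by
    intro c
    rw [integral_const_mul, hval]
  -- integral bounds
  have hI_ub : (∫ s in Ioi (0:ℝ), f s) ≤ 2 ^ p * KK d α * (t * M ^ (-(1:ℝ) - α)) := by
    have := setIntegral_mono_on hf_int hbub measurableSet_Ioi hub
    rw [hvalc] at this
    refine this.trans (le_of_eq ?_)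
    field_simp
  have hI_lb : (2 ^ p)⁻¹ * KK d α * (t * M ^ (-(1:ℝ) - α)) ≤ ∫ s in Ioi (0:ℝ), f s := by
    have := setIntegral_mono_on hblb hf_int measurableSet_Ioi hlb
    rw [hvalc] at this
    refine (le_of_eq ?_).trans this
    field_simp
  -- identify the min with t * M ^ (-1-α)
  have hmin : min (t ^ (-1 / α)) (t / r ^ ((1:ℝ) + α)) = t * M ^ (-(1:ℝ) - α) := by
    have hm1 : t ^ (-1 / α) = t * T ^ (-(1:ℝ) - α) := by
      rw [hTdef, ← Real.rpow_mul ht.le]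
      have h1 : t * t ^ ((1 / α) * (-(1:ℝ) - α)) = t ^ ((1:ℝ) + (1 / α) * (-(1:ℝ) - α)) := by
        rw [Real.rpow_add ht, Real.rpow_one]
      rw [h1]
      congr 1
      field_simp
      ring
    have hm2 : t / r ^ ((1:ℝ) + α) = t * r ^ (-(1:ℝ) - α) := by
      rw [show (-(1:ℝ) - α) = -(1 + α) by ring, Real.rpow_neg hr0.le, div_eq_mul_inv]
    have hmono : M ^ (-(1:ℝ) - α) = min (T ^ (-(1:ℝ) - α)) (r ^ (-(1:ℝ) - α)) := by
      rcases le_total T r with h | h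
      · rw [hMdef, max_eq_right h,
          min_eq_right (Real.rpow_le_rpow_of_nonpos hT0 h (by linarith))]
      · rw [hMdef, max_eq_left h,
          min_eq_left (Real.rpow_le_rpow_of_nonpos hr0 h (by linarith))]
    rw [hm1, hm2, hmono, ← (monotone_mul_left_of_nonneg ht.le).map_min]
  have hmpos : 0 < t * M ^ (-(1:ℝ) - α) := by
    have := rpow_pos_of_pos hM0 (-(1:ℝ) - α)
    positivity
  have hmaxK : 0 < max (KK d α) (KK d α)⁻¹ := lt_max_of_lt_left hK
  constructor
  · rw [hmin]
    refine le_trans ?_ hI_lb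
    rw [mul_inv]
    have h1 : (max (KK d α) (KK d α)⁻¹)⁻¹ ≤ KK d α := by
      calc (max (KK d α) (KK d α)⁻¹)⁻¹ ≤ ((KK d α)⁻¹)⁻¹ :=
            inv_anti₀ (by positivity) (le_max_right _ _)
        _ = KK d α := inv_inv _
    have h2 : (2 ^ p)⁻¹ * (max (KK d α) (KK d α)⁻¹)⁻¹ ≤ (2 ^ p)⁻¹ * KK d α :=
      mul_le_mul_of_nonneg_left h1 (by positivity)
    calc (2 ^ p)⁻¹ * (max (KK d α) (KK d α)⁻¹)⁻¹ * (t * M ^ (-(1:ℝ) - α))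
        ≤ (2 ^ p)⁻¹ * KK d α * (t * M ^ (-(1:ℝ) - α)) :=
          mul_le_mul_of_nonneg_right h2 hmpos.le
      _ ≤ _ := le_refl _
  · rw [hmin]
    refine hI_ub.trans ?_
    have h1 : KK d α ≤ max (KK d α) (KK d α)⁻¹ := le_max_left _ _
    have h2 : 2 ^ p * KK d α ≤ 2 ^ p * max (KK d α) (KK d α)⁻¹ :=
      mul_le_mul_of_nonneg_left h1 h2p.le
    exact mul_le_mul_of_nonneg_right h2 hmpos.le
end

section
/- Let $\alpha\in(0,2)$ and $\gamma_0,\gamma_1\in\mathbb{R}$ satisfy $-2/\alpha<\gamma_0$ and $-2<\gamma_1-\gamma_0\leq 2+2/\alpha$. Then there exists $C=C(\alpha,\gamma_0,\gamma_1)$ such that for all $x^1\in\mathbb{R}$, $\int_{\mathbb{R}}\Big(1\wedge\frac{1}{|x^1-y^1|^{1+\alpha}}\Big)\frac{|y^1|^{\gamma_0\alpha/2}}{(1+|y^1|^{\alpha/2})^{\gamma_1}}\,dy^1 \leq C\,(1+|x^1|^{\alpha/2})^{\gamma_0-\gamma_1}$. -/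
open MeasureTheory Real Set Filter

section helpers

lemma negrefl (F : ℝ → ENNReal) (s : Set ℝ) (hF : ∀ y, F (-y) = F y) :
    ∫⁻ y in Neg.neg '' s, F y = ∫⁻ y in s, F y := by
  rw [← (Measure.measurePreserving_neg (volume : Measure ℝ)).setLIntegral_comp_emb
    (MeasurableEquiv.neg ℝ).measurableEmbedding F s]
  simp only [hF]

lemma lintA0 {s R : ℝ} (hs : -1 < s) (hR : 0 < R) :
    ∫⁻ y in Icc (0:ℝ) R, ENNReal.ofReal (|y| ^ s) ≤ ENNReal.ofReal (R ^ (s+1) / (s+1)) := by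
  have hs1 : (0:ℝ) < s + 1 := by linarith
  have h1 : ∫⁻ y in Icc (0:ℝ) R, ENNReal.ofReal (|y| ^ s)
      ≤ ∫⁻ y in Icc (0:ℝ) R, ENNReal.ofReal (y ^ s) := by
    refine setLIntegral_mono (by fun_prop) fun y hy => ?_
    rw [abs_of_nonneg hy.1]
  refine h1.trans ?_
  have hint : IntegrableOn (fun y : ℝ => y ^ s) (Icc 0 R) := by
    rw [integrableOn_Icc_iff_integrableOn_Ioc]
    exact (intervalIntegrable_iff_integrableOn_Ioc_of_le hR.le).mp
      (intervalIntegral.intervalIntegrable_rpow' hs)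
  have hnn : 0 ≤ᵐ[volume.restrict (Icc (0:ℝ) R)] fun y : ℝ => y ^ s := by
    filter_upwards [ae_restrict_mem measurableSet_Icc] with y hy
    exact rpow_nonneg hy.1 s
  rw [← ofReal_integral_eq_lintegral_ofReal hint hnn]
  apply ENNReal.ofReal_le_ofReal
  rw [integral_Icc_eq_integral_Ioc, ← intervalIntegral.integral_of_le hR.le,
    integral_rpow (Or.inl hs)]
  rw [Real.zero_rpow (by positivity)]
  simp

lemma lintA {s R : ℝ} (hs : -1 < s) (hR : 0 < R) :
    ∫⁻ y in Icc (-R) R, ENNReal.ofReal (|y| ^ s)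
      ≤ ENNReal.ofReal (2 / (s+1) * R ^ (s+1)) := by
  have hs1 : (0:ℝ) < s + 1 := by linarith
  have hsub : Icc (-R) R ⊆ Icc (-R) 0 ∪ Icc 0 R := by
    intro y hy
    rcases le_total y 0 with h | h
    · exact Or.inl ⟨hy.1, h⟩
    · exact Or.inr ⟨h, hy.2⟩
  calc ∫⁻ y in Icc (-R) R, ENNReal.ofReal (|y| ^ s)
      ≤ ∫⁻ y in Icc (-R) 0 ∪ Icc 0 R, ENNReal.ofReal (|y| ^ s) :=
        lintegral_mono' (Measure.restrict_mono hsub le_rfl) le_rfl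
    _ ≤ (∫⁻ y in Icc (-R) 0, ENNReal.ofReal (|y| ^ s))
        + ∫⁻ y in Icc 0 R, ENNReal.ofReal (|y| ^ s) := lintegral_union_le _ _ _
    _ ≤ ENNReal.ofReal (R ^ (s+1) / (s+1)) + ENNReal.ofReal (R ^ (s+1) / (s+1)) := by
        have him : Neg.neg '' Icc (0:ℝ) R = Icc (-R) 0 := by
          rw [Set.image_neg_eq_neg, Set.neg_Icc]; simp
        have hneg : ∫⁻ y in Icc (-R) 0, ENNReal.ofReal (|y| ^ s)
            = ∫⁻ y in Icc (0:ℝ) R, ENNReal.ofReal (|y| ^ s) := by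
          rw [← him, negrefl _ _ fun y => by rw [abs_neg]]
        rw [hneg]
        exact add_le_add (lintA0 hs hR) (lintA0 hs hR)
    _ = ENNReal.ofReal (2 / (s+1) * R ^ (s+1)) := by
        rw [← ENNReal.ofReal_add (by positivity) (by positivity)]
        ring_nf

lemma lintB0 {s R : ℝ} (hs : s < -1) (hR : 0 < R) :
    ∫⁻ y in Ioi R, ENNReal.ofReal (|y| ^ s) ≤ ENNReal.ofReal (R ^ (s+1) / (-s-1)) := by
  have h1 : ∫⁻ y in Ioi R, ENNReal.ofReal (|y| ^ s)
      ≤ ∫⁻ y in Ioi R, ENNReal.ofReal (y ^ s) := by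
    refine setLIntegral_mono (by fun_prop) fun y hy => ?_
    rw [abs_of_nonneg (le_of_lt (hR.trans hy))]
  refine h1.trans ?_
  have hint : IntegrableOn (fun y : ℝ => y ^ s) (Ioi R) := integrableOn_Ioi_rpow_of_lt hs hR
  have hnn : 0 ≤ᵐ[volume.restrict (Ioi R)] fun y : ℝ => y ^ s := by
    filter_upwards [ae_restrict_mem measurableSet_Ioi] with y hy
    exact rpow_nonneg (hR.trans hy).le s
  rw [← ofReal_integral_eq_lintegral_ofReal hint hnn]
  apply ENNReal.ofReal_le_ofReal
  rw [integral_Ioi_rpow_of_lt hs hR]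
  rw [neg_div, ← div_neg]
  ring_nf
  exact le_refl _

lemma lintB {s R : ℝ} (hs : s < -1) (hR : 0 < R) :
    ∫⁻ y in {y : ℝ | R < |y|}, ENNReal.ofReal (|y| ^ s)
      ≤ ENNReal.ofReal (2 / (-s-1) * R ^ (s+1)) := by
  have hs1 : (0:ℝ) < -s - 1 := by linarith
  have hsub : {y : ℝ | R < |y|} ⊆ Iio (-R) ∪ Ioi R := by
    intro y hy
    simp only [mem_setOf_eq] at hy
    rcases lt_abs.mp hy with h | h
    · exact Or.inr h
    · exact Or.inl (by simpa using by linarith : y ∈ Iio (-R))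
  calc ∫⁻ y in {y : ℝ | R < |y|}, ENNReal.ofReal (|y| ^ s)
      ≤ ∫⁻ y in Iio (-R) ∪ Ioi R, ENNReal.ofReal (|y| ^ s) :=
        lintegral_mono' (Measure.restrict_mono hsub le_rfl) le_rfl
    _ ≤ (∫⁻ y in Iio (-R), ENNReal.ofReal (|y| ^ s))
        + ∫⁻ y in Ioi R, ENNReal.ofReal (|y| ^ s) := lintegral_union_le _ _ _
    _ ≤ ENNReal.ofReal (R ^ (s+1) / (-s-1)) + ENNReal.ofReal (R ^ (s+1) / (-s-1)) := by
        have him : Neg.neg '' Ioi (R:ℝ) = Iio (-R) := by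
          rw [Set.image_neg_eq_neg, Set.neg_Ioi]
        have hneg : ∫⁻ y in Iio (-R), ENNReal.ofReal (|y| ^ s)
            = ∫⁻ y in Ioi R, ENNReal.ofReal (|y| ^ s) := by
          rw [← him, negrefl _ _ fun y => by rw [abs_neg]]
        rw [hneg]
        exact add_le_add (lintB0 hs hR) (lintB0 hs hR)
    _ = ENNReal.ofReal (2 / (-s-1) * R ^ (s+1)) := by
        rw [← ENNReal.ofReal_add (by positivity) (by positivity)]
        ring_nf

lemma maxpow {t b : ℝ} (ht : 0 ≤ t) (hb : 0 ≤ b) : max 1 t ^ b = max 1 (t ^ b) := by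
  rcases le_total t 1 with h | h
  · rw [max_eq_left h, max_eq_left (Real.rpow_le_one ht h hb), Real.one_rpow]
  · rw [max_eq_right h, max_eq_right (Real.one_le_rpow h hb)]

lemma comp2 {γ s : ℝ} (hs : 0 ≤ s) : (1+s) ^ γ ≤ 2 ^ |γ| * max 1 s ^ γ := by
  have hm1 : (1:ℝ) ≤ max 1 s := le_max_left _ _
  have hm0 : (0:ℝ) < max 1 s := lt_of_lt_of_le one_pos hm1
  have h1 : max 1 s ≤ 1 + s := max_le (by linarith) (by linarith)
  have h2 : 1 + s ≤ 2 * max 1 s := by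
    have := le_max_left (1:ℝ) s; have := le_max_right (1:ℝ) s; linarith
  rcases le_or_gt 0 γ with hγ | hγ
  · rw [abs_of_nonneg hγ]
    calc (1+s) ^ γ ≤ (2 * max 1 s) ^ γ := Real.rpow_le_rpow (by linarith) h2 hγ
      _ = 2 ^ γ * max 1 s ^ γ := Real.mul_rpow (by norm_num) hm0.le
  · rw [abs_of_neg hγ]
    calc (1+s) ^ γ ≤ max 1 s ^ γ := Real.rpow_le_rpow_of_nonpos hm0 h1 hγ.le
      _ ≤ 2 ^ (-γ) * max 1 s ^ γ := by
          nlinarith [Real.one_le_rpow (by norm_num : (1:ℝ) ≤ 2) (by linarith : 0 ≤ -γ),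
            Real.rpow_nonneg hm0.le γ]

lemma comp1 {γ s : ℝ} (hs : 0 ≤ s) : max 1 s ^ γ ≤ 2 ^ |γ| * (1+s) ^ γ := by
  have hm1 : (1:ℝ) ≤ max 1 s := le_max_left _ _
  have hm0 : (0:ℝ) < max 1 s := lt_of_lt_of_le one_pos hm1
  have h1 : max 1 s ≤ 1 + s := max_le (by linarith) (by linarith)
  have h2 : 1 + s ≤ 2 * max 1 s := by
    have := le_max_left (1:ℝ) s; have := le_max_right (1:ℝ) s; linarith
  rcases le_or_gt 0 γ with hγ | hγ
  · rw [abs_of_nonneg hγ]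
    calc max 1 s ^ γ ≤ (1+s) ^ γ := Real.rpow_le_rpow hm0.le h1 hγ
      _ ≤ 2 ^ γ * (1+s) ^ γ := by
          nlinarith [Real.one_le_rpow (by norm_num : (1:ℝ) ≤ 2) hγ,
            Real.rpow_nonneg (by linarith : (0:ℝ) ≤ 1 + s) γ]
  · rw [abs_of_neg hγ]
    have h3 : (2 * max 1 s) ^ γ ≤ (1+s) ^ γ :=
      Real.rpow_le_rpow_of_nonpos (by linarith) h2 hγ.le
    have h4 : (2 * max 1 s) ^ γ = 2 ^ γ * max 1 s ^ γ := Real.mul_rpow (by norm_num) hm0.le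
    have h5 : (2:ℝ) ^ (-γ) * 2 ^ γ = 1 := by
      rw [← Real.rpow_add (by norm_num)]; simp
    calc max 1 s ^ γ = 2 ^ (-γ) * (2 ^ γ * max 1 s ^ γ) := by
          rw [← mul_assoc, h5, one_mul]
      _ = 2 ^ (-γ) * (2 * max 1 s) ^ γ := by rw [h4]
      _ ≤ 2 ^ (-γ) * (1+s) ^ γ := by
          have : (0:ℝ) ≤ 2 ^ (-γ) := Real.rpow_nonneg (by norm_num) _
          nlinarith

lemma transl (F : ℝ → ENNReal) (x : ℝ) : ∫⁻ y, F (x - y) = ∫⁻ y, F y :=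
  (Measure.measurePreserving_sub_left volume x).lintegral_comp_emb
    (MeasurableEquiv.subLeft x).measurableEmbedding F

lemma kap {β : ℝ} (hβ : 1 < β) :
    ∫⁻ z : ℝ, ENNReal.ofReal (min 1 (1 / |z| ^ β)) ≤ ENNReal.ofReal (2 + 2 / (β - 1)) := by
  have hA : MeasurableSet (Icc (-1:ℝ) 1) := measurableSet_Icc
  rw [← lintegral_add_compl (fun z => ENNReal.ofReal (min 1 (1 / |z| ^ β))) hA]
  have h1 : ∫⁻ z in Icc (-1:ℝ) 1, ENNReal.ofReal (min 1 (1 / |z| ^ β))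
      ≤ ENNReal.ofReal 2 := by
    calc ∫⁻ z in Icc (-1:ℝ) 1, ENNReal.ofReal (min 1 (1 / |z| ^ β))
        ≤ ∫⁻ _ in Icc (-1:ℝ) 1, 1 := setLIntegral_mono' hA fun z _ => by
          simpa using ENNReal.ofReal_le_ofReal (min_le_left _ _)
      _ = volume (Icc (-1:ℝ) 1) := by simp
      _ = ENNReal.ofReal 2 := by rw [Real.volume_Icc]; norm_num
  have h2 : ∫⁻ z in (Icc (-1:ℝ) 1)ᶜ, ENNReal.ofReal (min 1 (1 / |z| ^ β))
      ≤ ENNReal.ofReal (2 / (β - 1)) := by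
    have hset : (Icc (-1:ℝ) 1)ᶜ = {z : ℝ | 1 < |z|} := by
      ext z
      simp only [mem_compl_iff, mem_Icc, mem_setOf_eq, not_and_or, not_le, lt_abs]
      constructor
      · rintro (h | h)
        · exact Or.inr (by linarith)
        · exact Or.inl h
      · rintro (h | h)
        · exact Or.inr h
        · exact Or.inl (by linarith)
    rw [hset]
    calc ∫⁻ z in {z : ℝ | 1 < |z|}, ENNReal.ofReal (min 1 (1 / |z| ^ β))
        ≤ ∫⁻ z in {z : ℝ | 1 < |z|}, ENNReal.ofReal (|z| ^ (-β)) := by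
          refine setLIntegral_mono' ?_ fun z hz => ?_
          · exact measurableSet_lt measurable_const measurable_id.abs
          · refine ENNReal.ofReal_le_ofReal ?_
            rw [Real.rpow_neg (abs_nonneg z), ← one_div]
            exact min_le_right _ _
      _ ≤ ENNReal.ofReal (2 / (-(-β) - 1) * 1 ^ (-β + 1)) := lintB (by linarith) one_pos
      _ = ENNReal.ofReal (2 / (β - 1)) := by rw [Real.one_rpow]; ring_nf
  calc _ ≤ ENNReal.ofReal 2 + ENNReal.ofReal (2 / (β - 1)) := add_le_add h1 h2
    _ = ENNReal.ofReal (2 + 2 / (β - 1)) := by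
        have h : (0:ℝ) < β - 1 := by linarith
        rw [← ENNReal.ofReal_add (by norm_num) (by positivity)]

lemma halfpow {β m : ℝ} (hβ : 0 < β) (hm : 0 < m) :
    (m / 2) ^ (-β) = 2 ^ β * m ^ (-β) := by
  rw [Real.rpow_neg (by positivity), Real.div_rpow hm.le (by norm_num),
    Real.rpow_neg hm.le, inv_div, div_eq_mul_inv]

end helpers

set_option maxHeartbeats 3000000 in
/-- one-dimensional core estimate behind Lemma A.2: under
`-2/α < γ₀`, `-2 < γ₁ - γ₀ ≤ 2 + 2/α`, one has
`∫_ℝ (1 ∧ |x¹-y¹|^{-1-α}) |y¹|^{γ₀α/2} (1+|y¹|^{α/2})^{-γ₁} dy¹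
  ≤ C (1+|x¹|^{α/2})^{γ₀-γ₁}`. -/
theorem stmt3 (α γ0 γ1 : ℝ) (hα : α ∈ Set.Ioo (0 : ℝ) 2)
    (h0 : -2 / α < γ0) (h1 : -2 < γ1 - γ0) (h2 : γ1 - γ0 ≤ 2 + 2 / α) :
    ∃ C : ℝ, 0 < C ∧
      ∀ x1 : ℝ,
        (∫⁻ y1 : ℝ,
            ENNReal.ofReal (min 1 (1 / |x1 - y1| ^ ((1 : ℝ) + α)) *
              (|y1| ^ (γ0 * α / 2) / (1 + |y1| ^ (α / 2)) ^ γ1)))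
          ≤ ENNReal.ofReal (C * (1 + |x1| ^ (α / 2)) ^ (γ0 - γ1)) := by
  obtain ⟨hα0, hα2⟩ := hα
  set β := (1 : ℝ) + α with hβd
  set a := γ0 * α / 2 with had
  set b := α / 2 with hbd
  have hb0 : 0 < b := by rw [hbd]; positivity
  set cc := γ1 * α / 2 with hccd
  set p := a - cc with hpd
  have hβ1 : 1 < β := by rw [hβd]; linarith
  have hβ0 : 0 < β := by linarith
  -- numeric facts
  have ha : -1 < a := by
    have h := (div_lt_iff₀ hα0).mp h0
    rw [had]; nlinarith
  have ha1 : (0:ℝ) < a + 1 := by linarith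
  have hpl : -β ≤ p := by
    have h := mul_le_mul_of_nonneg_right h2 hα0.le
    have h' : (2 + 2/α) * α = 2*α + 2 := by field_simp
    rw [hpd, had, hccd, hβd]; nlinarith
  have hpu : p < α := by
    rw [hpd, had, hccd]; nlinarith
  have hαp : (0:ℝ) < α - p := by linarith
  set s0 := max p (-1 + α/2) with hs0d
  have hs0 : -1 < s0 := lt_of_lt_of_le (by linarith) (le_max_right _ _)
  have hs01 : (0:ℝ) < s0 + 1 := by linarith
  have hps0 : p ≤ s0 := le_max_left _ _
  have hs0exp : -1 ≤ p → s0 + 1 - β ≤ p := by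
    intro hp1
    rcases max_cases p (-1 + α/2) with ⟨h, _⟩ | ⟨h, hle⟩
    · rw [hs0d, h]; linarith
    · rw [hs0d, h]; linarith
  -- constants
  set c1 := (2:ℝ)^β * (2/(a+1)) with hc1d
  set c2 := (2:ℝ)^|p| * (2 + 2/α) with hc2d
  set c3 := (2:ℝ)^β * (2/(s0+1)) * 2^(s0+1) + (2:ℝ)^β * (2/|p+1|) with hc3d
  set c4 := (2:ℝ)^β * (2/(α-p)) * 2^(p-β+1) with hc4d
  have hc1 : 0 < c1 := by rw [hc1d]; positivity
  have hc2 : 0 < c2 := by rw [hc2d]; positivity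
  have hc3 : 0 < c3 := by
    rw [hc3d]
    refine add_pos_of_pos_of_nonneg (by positivity) ?_
    positivity
  have hc4 : 0 < c4 := by rw [hc4d]; positivity
  set C0 := c1 + c2 + c3 + c4 with hC0d
  have hC0 : 0 < C0 := by rw [hC0d]; linarith
  refine ⟨2^|γ1| * C0 * 2^|γ0-γ1|, by positivity, fun x1 => ?_⟩
  set M := max 1 |x1| with hMd
  have hM1 : (1:ℝ) ≤ M := le_max_left _ _
  have hM0 : (0:ℝ) < M := lt_of_lt_of_le one_pos hM1
  have hMp0 : (0:ℝ) ≤ M ^ p := Real.rpow_nonneg hM0.le p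
  set K := fun z : ℝ => min 1 (1 / |z| ^ β) with hKd
  have hK0 : ∀ z, 0 ≤ K z := fun z => le_min zero_le_one (by positivity)
  have hKr : ∀ (z r : ℝ), 0 < r → r ≤ |z| → K z ≤ r ^ (-β) := by
    intro z r hr hrz
    have h1 : r ^ β ≤ |z| ^ β := Real.rpow_le_rpow hr.le hrz hβ0.le
    have h2 : (0:ℝ) < r ^ β := Real.rpow_pos_of_pos hr β
    calc K z ≤ 1 / |z| ^ β := min_le_right _ _
      _ ≤ 1 / r ^ β := by gcongr
      _ = r ^ (-β) := by rw [Real.rpow_neg hr.le, one_div]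
  set G := fun y : ℝ => |y| ^ a * (max 1 |y|) ^ (-cc) with hGd
  have hG0 : ∀ y, 0 ≤ G y := fun y => by
    rw [hGd]
    exact mul_nonneg (Real.rpow_nonneg (abs_nonneg y) a)
      (Real.rpow_nonneg (le_trans zero_le_one (le_max_left _ _)) _)
  have hGgt : ∀ y : ℝ, 1 < |y| → G y = |y| ^ p := by
    intro y hy1
    have hy0 : (0:ℝ) < |y| := lt_trans one_pos hy1
    rw [hGd]
    simp only []
    rw [max_eq_right hy1.le, ← Real.rpow_add hy0]
    congr 1
  -- pointwise domination by 2^|γ1| * K * G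
  have step0 : ∀ y : ℝ,
      ENNReal.ofReal (min 1 (1 / |x1 - y| ^ β) * (|y| ^ a / (1 + |y| ^ b) ^ γ1))
        ≤ ENNReal.ofReal (2 ^ |γ1|) * ENNReal.ofReal (K (x1 - y) * G y) := by
    intro y
    have hsb : (0:ℝ) ≤ |y| ^ b := Real.rpow_nonneg (abs_nonneg y) b
    have hwG : |y| ^ a / (1 + |y| ^ b) ^ γ1 ≤ 2 ^ |γ1| * G y := by
      have e1 : |y| ^ a / (1 + |y| ^ b) ^ γ1 = |y| ^ a * (1 + |y| ^ b) ^ (-γ1) := by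
        rw [Real.rpow_neg (by positivity), div_eq_mul_inv]
      have e2 : (1 + |y| ^ b) ^ (-γ1) ≤ 2 ^ |γ1| * (max 1 (|y| ^ b)) ^ (-γ1) := by
        simpa [abs_neg] using comp2 (γ := -γ1) hsb
      have e3 : (max 1 (|y| ^ b)) ^ (-γ1) = (max 1 |y|) ^ (-cc) := by
        rw [← maxpow (abs_nonneg y) hb0.le,
          ← Real.rpow_mul (le_trans zero_le_one (le_max_left _ _))]
        congr 1
        rw [hccd, hbd]; ring
      rw [e1]
      calc |y| ^ a * (1 + |y| ^ b) ^ (-γ1)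
          ≤ |y| ^ a * (2 ^ |γ1| * (max 1 (|y| ^ b)) ^ (-γ1)) :=
            mul_le_mul_of_nonneg_left e2 (Real.rpow_nonneg (abs_nonneg y) a)
        _ = 2 ^ |γ1| * (|y| ^ a * (max 1 |y|) ^ (-cc)) := by rw [e3]; ring
        _ = 2 ^ |γ1| * G y := by rw [hGd]
    rw [← ENNReal.ofReal_mul (Real.rpow_nonneg (by norm_num) _)]
    refine ENNReal.ofReal_le_ofReal ?_
    calc min 1 (1 / |x1 - y| ^ β) * (|y| ^ a / (1 + |y| ^ b) ^ γ1)
        ≤ K (x1 - y) * (2 ^ |γ1| * G y) :=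
          mul_le_mul_of_nonneg_left hwG (hK0 _)
      _ = 2 ^ |γ1| * (K (x1 - y) * G y) := by ring
  -- kernel bound on the unit ball
  have hA : MeasurableSet (Icc (-1:ℝ) 1) := measurableSet_Icc
  have hMβnn : (0:ℝ) ≤ 2^β * M^(-β) := by positivity
  have hMneg : M^(-β) ≤ M^p := Real.rpow_le_rpow_of_exponent_le hM1 (by linarith)
  have hKS1 : ∀ y ∈ Icc (-1:ℝ) 1, K (x1 - y) ≤ 2^β * M^(-β) := by
    intro y hy
    have hy1 : |y| ≤ 1 := abs_le.mpr ⟨hy.1, hy.2⟩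
    rcases le_or_gt M 2 with hM2 | hM2
    · refine le_trans (min_le_left _ _) ?_
      have e : (2:ℝ)^β * M^(-β) = (2/M)^β := by
        rw [Real.div_rpow (by norm_num) hM0.le, Real.rpow_neg hM0.le, div_eq_mul_inv]
      rw [e]
      exact Real.one_le_rpow (by rw [le_div_iff₀ hM0]; linarith) hβ0.le
    · have hx2 : 2 < |x1| := by
        by_contra hc
        push_neg at hc
        have : M ≤ 2 := max_le (by norm_num) hc
        linarith
      have hMx : M = |x1| := max_eq_right (by linarith)
      have hd : M/2 ≤ |x1 - y| := by
        have h1 : |x1| - |y| ≤ |x1 - y| := abs_sub_abs_le_abs_sub x1 y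
        rw [hMx]
        linarith
      calc K (x1 - y) ≤ (M/2)^(-β) := hKr _ _ (by positivity) hd
        _ = 2^β * M^(-β) := halfpow hβ0 hM0
  -- piece 1 : unit ball
  have hI1 : ∫⁻ y in Icc (-1:ℝ) 1, ENNReal.ofReal (K (x1 - y) * G y)
      ≤ ENNReal.ofReal (c1 * M^p) := by
    have hstep : ∀ y ∈ Icc (-1:ℝ) 1, ENNReal.ofReal (K (x1 - y) * G y)
        ≤ ENNReal.ofReal (2^β * M^(-β)) * ENNReal.ofReal (|y| ^ a) := by
      intro y hy
      have hy1 : |y| ≤ 1 := abs_le.mpr ⟨hy.1, hy.2⟩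
      have hGy : G y = |y| ^ a := by
        rw [hGd]
        simp only []
        rw [max_eq_left hy1, Real.one_rpow, mul_one]
      rw [← ENNReal.ofReal_mul hMβnn]
      refine ENNReal.ofReal_le_ofReal ?_
      rw [hGy]
      exact mul_le_mul_of_nonneg_right (hKS1 y hy) (Real.rpow_nonneg (abs_nonneg y) a)
    calc ∫⁻ y in Icc (-1:ℝ) 1, ENNReal.ofReal (K (x1 - y) * G y)
        ≤ ∫⁻ y in Icc (-1:ℝ) 1, ENNReal.ofReal (2^β * M^(-β)) * ENNReal.ofReal (|y| ^ a) :=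
          setLIntegral_mono' hA hstep
      _ = ENNReal.ofReal (2^β * M^(-β)) * ∫⁻ y in Icc (-1:ℝ) 1, ENNReal.ofReal (|y| ^ a) :=
          lintegral_const_mul' _ _ ENNReal.ofReal_ne_top
      _ ≤ ENNReal.ofReal (2^β * M^(-β)) * ENNReal.ofReal (2/(a+1) * 1 ^ (a+1)) :=
          mul_le_mul_right (by simpa using lintA ha one_pos) _
      _ ≤ ENNReal.ofReal (c1 * M^p) := by
          rw [← ENNReal.ofReal_mul hMβnn]
          refine ENNReal.ofReal_le_ofReal ?_
          rw [Real.one_rpow, hc1d]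
          have h2a : (0:ℝ) ≤ 2^β * (2/(a+1)) := by positivity
          calc 2^β * M^(-β) * (2/(a+1) * 1) = (2^β * (2/(a+1))) * M^(-β) := by ring
            _ ≤ (2^β * (2/(a+1))) * M^p := mul_le_mul_of_nonneg_left hMneg h2a
  -- region sets
  set TN := {y : ℝ | 1 < |y|} ∩ {y : ℝ | |x1 - y| ≤ M/2} with hTNd
  set TF1 := ({y : ℝ | 1 < |y|} ∩ {y : ℝ | |y| ≤ 2*M}) ∩ {y : ℝ | M/2 < |x1 - y|} with hTF1d
  set TF2 := {y : ℝ | 2*M < |y|} with hTF2d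
  have hmabs : Measurable fun y : ℝ => |y| := measurable_id.abs
  have hmd : Measurable fun y : ℝ => |x1 - y| := (measurable_const.sub measurable_id).abs
  have hm1 : MeasurableSet {y : ℝ | 1 < |y|} := measurableSet_lt measurable_const hmabs
  have hmTN : MeasurableSet TN := hm1.inter (measurableSet_le hmd measurable_const)
  have hmTF1 : MeasurableSet TF1 :=
    (hm1.inter (measurableSet_le hmabs measurable_const)).inter
      (measurableSet_lt measurable_const hmd)
  have hmTF2 : MeasurableSet TF2 := measurableSet_lt measurable_const hmabs
  have hcover : (Icc (-1:ℝ) 1)ᶜ ⊆ TN ∪ (TF1 ∪ TF2) := by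
    intro y hy
    have hy1 : 1 < |y| := by
      simp only [mem_compl_iff, mem_Icc, not_and_or, not_le] at hy
      rcases hy with h | h
      · exact lt_abs.mpr (Or.inr (by linarith))
      · exact lt_abs.mpr (Or.inl h)
    rcases le_or_gt |y| (2*M) with h2M | h2M
    · rcases le_or_gt |x1 - y| (M/2) with hd | hd
      · exact Or.inl ⟨hy1, hd⟩
      · exact Or.inr (Or.inl ⟨⟨hy1, h2M⟩, hd⟩)
    · exact Or.inr (Or.inr h2M)
  -- piece TN
  have hITN : ∫⁻ y in TN, ENNReal.ofReal (K (x1 - y) * G y)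
      ≤ ENNReal.ofReal (c2 * M^p) := by
    have h2pM : (0:ℝ) ≤ 2^|p| * M^p := by positivity
    have hstep : ∀ y ∈ TN, ENNReal.ofReal (K (x1 - y) * G y)
        ≤ ENNReal.ofReal (2^|p| * M^p) * ENNReal.ofReal (K (x1 - y)) := by
      intro y hy
      obtain ⟨hy1, hyd⟩ := hy
      have hy1 : (1:ℝ) < |y| := hy1
      have hyd : |x1 - y| ≤ M/2 := hyd
      have hy0 : (0:ℝ) < |y| := lt_trans one_pos hy1
      have hub : |y| ≤ 2*M := by
        have h1 : |y| - |x1| ≤ |y - x1| := abs_sub_abs_le_abs_sub y x1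
        have h2 : |y - x1| = |x1 - y| := abs_sub_comm y x1
        have h3 : |x1| ≤ M := le_max_right 1 |x1|
        linarith
      have hlb : M/2 ≤ |y| := by
        rcases le_or_gt |x1| 1 with hx | hx
        · have : M = 1 := max_eq_left hx
          rw [this]; linarith
        · have hMx : M = |x1| := max_eq_right hx.le
          have h1 : |x1| - |y| ≤ |x1 - y| := abs_sub_abs_le_abs_sub x1 y
          rw [hMx]; linarith
      have hyp : |y| ^ p ≤ 2^|p| * M^p := by
        rcases le_or_gt 0 p with hp0 | hp0
        · rw [abs_of_nonneg hp0]
          calc |y| ^ p ≤ (2*M) ^ p := Real.rpow_le_rpow (abs_nonneg y) hub hp0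
            _ = 2^p * M^p := Real.mul_rpow (by norm_num) hM0.le
        · rw [abs_of_neg hp0]
          calc |y| ^ p ≤ (M/2) ^ p := Real.rpow_le_rpow_of_nonpos (by positivity) hlb hp0.le
            _ = M^p / 2^p := by rw [Real.div_rpow hM0.le (by norm_num : (0:ℝ) ≤ 2)]
            _ = 2^(-p) * M^p := by
                rw [Real.rpow_neg (by norm_num), div_eq_mul_inv]; ring
      rw [← ENNReal.ofReal_mul h2pM]
      refine ENNReal.ofReal_le_ofReal ?_
      rw [hGgt y hy1]
      calc K (x1 - y) * |y| ^ p ≤ K (x1 - y) * (2^|p| * M^p) :=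
            mul_le_mul_of_nonneg_left hyp (hK0 _)
        _ = 2^|p| * M^p * K (x1 - y) := by ring
    calc ∫⁻ y in TN, ENNReal.ofReal (K (x1 - y) * G y)
        ≤ ∫⁻ y in TN, ENNReal.ofReal (2^|p| * M^p) * ENNReal.ofReal (K (x1 - y)) :=
          setLIntegral_mono' hmTN hstep
      _ = ENNReal.ofReal (2^|p| * M^p) * ∫⁻ y in TN, ENNReal.ofReal (K (x1 - y)) :=
          lintegral_const_mul' _ _ ENNReal.ofReal_ne_top
      _ ≤ ENNReal.ofReal (2^|p| * M^p) * ∫⁻ y, ENNReal.ofReal (K (x1 - y)) :=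
          mul_le_mul_right (setLIntegral_le_lintegral _ _) _
      _ ≤ ENNReal.ofReal (2^|p| * M^p) * ENNReal.ofReal (2 + 2/α) := by
          refine mul_le_mul_right ?_ _
          calc ∫⁻ y, ENNReal.ofReal (K (x1 - y)) = ∫⁻ z, ENNReal.ofReal (K z) :=
                transl (fun z => ENNReal.ofReal (K z)) x1
            _ ≤ ENNReal.ofReal (2 + 2/(β-1)) := by
                simp only [hKd]
                exact kap hβ1
            _ = ENNReal.ofReal (2 + 2/α) := by
                congr 1
                rw [hβd]; ring_nf
      _ = ENNReal.ofReal (c2 * M^p) := by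
          rw [← ENNReal.ofReal_mul h2pM, hc2d]
          congr 1
          ring
  -- piece TF1
  have hITF1 : ∫⁻ y in TF1, ENNReal.ofReal (K (x1 - y) * G y)
      ≤ ENNReal.ofReal (c3 * M^p) := by
    have hKb : ∀ y ∈ TF1, K (x1 - y) ≤ 2^β * M^(-β) := by
      intro y hy
      calc K (x1 - y) ≤ (M/2)^(-β) := hKr _ _ (by positivity) hy.2.le
        _ = 2^β * M^(-β) := halfpow hβ0 hM0
    have hc3B : (0:ℝ) ≤ (2:ℝ)^β * (2/|p+1|) := by positivity
    have hc3A : (0:ℝ) ≤ (2:ℝ)^β * (2/(s0+1)) * 2^(s0+1) := by positivity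
    rcases le_or_gt (-1:ℝ) p with hp1 | hp1
    · -- use exponent s0
      have hstep : ∀ y ∈ TF1, ENNReal.ofReal (K (x1 - y) * G y)
          ≤ ENNReal.ofReal (2^β * M^(-β)) * ENNReal.ofReal (|y| ^ s0) := by
        intro y hy
        have hy1 : (1:ℝ) < |y| := hy.1.1
        have hGy : G y = |y| ^ p := hGgt y hy1
        have hyp : |y| ^ p ≤ |y| ^ s0 := Real.rpow_le_rpow_of_exponent_le hy1.le hps0
        rw [← ENNReal.ofReal_mul hMβnn]
        refine ENNReal.ofReal_le_ofReal ?_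
        rw [hGy]
        calc K (x1 - y) * |y| ^ p ≤ (2^β * M^(-β)) * |y| ^ s0 :=
              mul_le_mul (hKb y hy) hyp (Real.rpow_nonneg (abs_nonneg y) p) hMβnn
          _ = 2^β * M^(-β) * |y| ^ s0 := by ring
      calc ∫⁻ y in TF1, ENNReal.ofReal (K (x1 - y) * G y)
          ≤ ∫⁻ y in TF1, ENNReal.ofReal (2^β * M^(-β)) * ENNReal.ofReal (|y| ^ s0) :=
            setLIntegral_mono' hmTF1 hstep
        _ = ENNReal.ofReal (2^β * M^(-β)) * ∫⁻ y in TF1, ENNReal.ofReal (|y| ^ s0) :=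
            lintegral_const_mul' _ _ ENNReal.ofReal_ne_top
        _ ≤ ENNReal.ofReal (2^β * M^(-β)) * ∫⁻ y in Icc (-(2*M)) (2*M), ENNReal.ofReal (|y| ^ s0) := by
            refine mul_le_mul_right (lintegral_mono' (Measure.restrict_mono ?_ le_rfl) le_rfl) _
            intro y hy
            exact ⟨(abs_le.mp hy.1.2).1, (abs_le.mp hy.1.2).2⟩
        _ ≤ ENNReal.ofReal (2^β * M^(-β)) * ENNReal.ofReal (2/(s0+1) * (2*M) ^ (s0+1)) :=
            mul_le_mul_right (lintA hs0 (by positivity)) _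
        _ ≤ ENNReal.ofReal (c3 * M^p) := by
            rw [← ENNReal.ofReal_mul hMβnn]
            refine ENNReal.ofReal_le_ofReal ?_
            have e1 : (2*M) ^ (s0+1) = 2^(s0+1) * M^(s0+1) := Real.mul_rpow (by norm_num) hM0.le
            have e2 : M^(-β) * M^(s0+1) = M^(s0+1-β) := by
              rw [← Real.rpow_add hM0]
              congr 1
              ring
            have e3 : M^(s0+1-β) ≤ M^p := Real.rpow_le_rpow_of_exponent_le hM1 (hs0exp hp1)
            calc 2^β * M^(-β) * (2/(s0+1) * (2*M) ^ (s0+1))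
                = (2^β * (2/(s0+1)) * 2^(s0+1)) * (M^(-β) * M^(s0+1)) := by rw [e1]; ring
              _ = (2^β * (2/(s0+1)) * 2^(s0+1)) * M^(s0+1-β) := by rw [e2]
              _ ≤ (2^β * (2/(s0+1)) * 2^(s0+1)) * M^p := mul_le_mul_of_nonneg_left e3 hc3A
              _ ≤ c3 * M^p := by
                  rw [hc3d]
                  nlinarith [mul_nonneg hc3B hMp0]
    · -- p < -1 : integrable tail over |y| > 1
      have habs : |p+1| = -p-1 := by
        rw [abs_of_neg (by linarith)]; ring
      have hstep : ∀ y ∈ TF1, ENNReal.ofReal (K (x1 - y) * G y)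
          ≤ ENNReal.ofReal (2^β * M^(-β)) * ENNReal.ofReal (|y| ^ p) := by
        intro y hy
        have hy1 : (1:ℝ) < |y| := hy.1.1
        rw [← ENNReal.ofReal_mul hMβnn]
        refine ENNReal.ofReal_le_ofReal ?_
        rw [hGgt y hy1]
        exact mul_le_mul_of_nonneg_right (hKb y hy) (Real.rpow_nonneg (abs_nonneg y) p)
      calc ∫⁻ y in TF1, ENNReal.ofReal (K (x1 - y) * G y)
          ≤ ∫⁻ y in TF1, ENNReal.ofReal (2^β * M^(-β)) * ENNReal.ofReal (|y| ^ p) :=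
            setLIntegral_mono' hmTF1 hstep
        _ = ENNReal.ofReal (2^β * M^(-β)) * ∫⁻ y in TF1, ENNReal.ofReal (|y| ^ p) :=
            lintegral_const_mul' _ _ ENNReal.ofReal_ne_top
        _ ≤ ENNReal.ofReal (2^β * M^(-β)) * ∫⁻ y in {y : ℝ | 1 < |y|}, ENNReal.ofReal (|y| ^ p) := by
            refine mul_le_mul_right (lintegral_mono' (Measure.restrict_mono ?_ le_rfl) le_rfl) _
            intro y hy
            exact hy.1.1
        _ ≤ ENNReal.ofReal (2^β * M^(-β)) * ENNReal.ofReal (2/(-p-1) * 1 ^ (p+1)) :=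
            mul_le_mul_right (lintB hp1 one_pos) _
        _ ≤ ENNReal.ofReal (c3 * M^p) := by
            rw [← ENNReal.ofReal_mul hMβnn]
            refine ENNReal.ofReal_le_ofReal ?_
            rw [Real.one_rpow]
            have hpos : (0:ℝ) ≤ 2^β * (2/(-p-1)) := by
              have : (0:ℝ) < -p-1 := by linarith
              positivity
            calc 2^β * M^(-β) * (2/(-p-1) * 1)
                = (2^β * (2/(-p-1))) * M^(-β) := by ring
              _ ≤ (2^β * (2/(-p-1))) * M^p := mul_le_mul_of_nonneg_left hMneg hpos
              _ ≤ c3 * M^p := by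
                  rw [hc3d, habs]
                  nlinarith [mul_nonneg hc3A hMp0]
  -- piece TF2
  have hITF2 : ∫⁻ y in TF2, ENNReal.ofReal (K (x1 - y) * G y)
      ≤ ENNReal.ofReal (c4 * M^p) := by
    have h2βnn : (0:ℝ) ≤ (2:ℝ)^β := Real.rpow_nonneg (by norm_num) β
    have hpβ : p - β < -1 := by
      rw [hβd]; linarith
    have hstep : ∀ y ∈ TF2, ENNReal.ofReal (K (x1 - y) * G y)
        ≤ ENNReal.ofReal ((2:ℝ)^β) * ENNReal.ofReal (|y| ^ (p-β)) := by
      intro y hy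
      have h2M : 2*M < |y| := hy
      have hy1 : (1:ℝ) < |y| := by linarith
      have hy0 : (0:ℝ) < |y| := by linarith
      have hd : |y|/2 ≤ |x1 - y| := by
        have h1 : |y| - |x1| ≤ |y - x1| := abs_sub_abs_le_abs_sub y x1
        have h2 : |y - x1| = |x1 - y| := abs_sub_comm y x1
        have h3 : |x1| ≤ M := le_max_right 1 |x1|
        linarith
      have hKb : K (x1 - y) ≤ 2^β * |y|^(-β) := by
        calc K (x1 - y) ≤ (|y|/2)^(-β) := hKr _ _ (by positivity) hd
          _ = 2^β * |y|^(-β) := halfpow hβ0 hy0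
      rw [← ENNReal.ofReal_mul h2βnn]
      refine ENNReal.ofReal_le_ofReal ?_
      rw [hGgt y hy1]
      calc K (x1 - y) * |y| ^ p ≤ (2^β * |y|^(-β)) * |y| ^ p :=
            mul_le_mul_of_nonneg_right hKb (Real.rpow_nonneg (abs_nonneg y) p)
        _ = 2^β * |y| ^ (p-β) := by
            rw [mul_assoc, ← Real.rpow_add hy0]
            congr 2
            ring
    calc ∫⁻ y in TF2, ENNReal.ofReal (K (x1 - y) * G y)
        ≤ ∫⁻ y in TF2, ENNReal.ofReal ((2:ℝ)^β) * ENNReal.ofReal (|y| ^ (p-β)) :=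
          setLIntegral_mono' hmTF2 hstep
      _ = ENNReal.ofReal ((2:ℝ)^β) * ∫⁻ y in {y : ℝ | 2*M < |y|}, ENNReal.ofReal (|y| ^ (p-β)) :=
          lintegral_const_mul' _ _ ENNReal.ofReal_ne_top
      _ ≤ ENNReal.ofReal ((2:ℝ)^β) * ENNReal.ofReal (2/(-(p-β)-1) * (2*M) ^ ((p-β)+1)) :=
          mul_le_mul_right (lintB hpβ (by positivity)) _
      _ ≤ ENNReal.ofReal (c4 * M^p) := by
          rw [← ENNReal.ofReal_mul h2βnn]
          refine ENNReal.ofReal_le_ofReal ?_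
          have e0 : -(p-β)-1 = α - p := by rw [hβd]; ring
          have e1 : (2*M) ^ (p-β+1) = 2^(p-β+1) * M^(p-β+1) := Real.mul_rpow (by norm_num) hM0.le
          have e2 : M^(p-β+1) ≤ M^p := Real.rpow_le_rpow_of_exponent_le hM1 (by linarith)
          have hco : (0:ℝ) ≤ 2^β * (2/(α-p)) * 2^(p-β+1) := by positivity
          calc (2:ℝ)^β * (2/(-(p-β)-1) * (2*M) ^ (p-β+1))
              = (2^β * (2/(α-p)) * 2^(p-β+1)) * M^(p-β+1) := by rw [e0, e1]; ring
            _ ≤ (2^β * (2/(α-p)) * 2^(p-β+1)) * M^p := mul_le_mul_of_nonneg_left e2 hco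
            _ = c4 * M^p := by rw [hc4d]
  -- combine
  have Imain : ∫⁻ y, ENNReal.ofReal (K (x1 - y) * G y) ≤ ENNReal.ofReal (C0 * M^p) := by
    rw [← lintegral_add_compl (fun y => ENNReal.ofReal (K (x1 - y) * G y)) hA]
    have hIc : ∫⁻ y in (Icc (-1:ℝ) 1)ᶜ, ENNReal.ofReal (K (x1 - y) * G y)
        ≤ ENNReal.ofReal (c2 * M^p) + (ENNReal.ofReal (c3 * M^p) + ENNReal.ofReal (c4 * M^p)) := by
      calc ∫⁻ y in (Icc (-1:ℝ) 1)ᶜ, ENNReal.ofReal (K (x1 - y) * G y)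
          ≤ ∫⁻ y in TN ∪ (TF1 ∪ TF2), ENNReal.ofReal (K (x1 - y) * G y) :=
            lintegral_mono' (Measure.restrict_mono hcover le_rfl) le_rfl
        _ ≤ (∫⁻ y in TN, ENNReal.ofReal (K (x1 - y) * G y))
            + ∫⁻ y in TF1 ∪ TF2, ENNReal.ofReal (K (x1 - y) * G y) := lintegral_union_le _ _ _
        _ ≤ (∫⁻ y in TN, ENNReal.ofReal (K (x1 - y) * G y))
            + ((∫⁻ y in TF1, ENNReal.ofReal (K (x1 - y) * G y))
              + ∫⁻ y in TF2, ENNReal.ofReal (K (x1 - y) * G y)) :=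
            add_le_add_right (lintegral_union_le _ _ _) _
        _ ≤ _ := add_le_add hITN (add_le_add hITF1 hITF2)
    calc _ ≤ ENNReal.ofReal (c1 * M^p)
          + (ENNReal.ofReal (c2 * M^p) + (ENNReal.ofReal (c3 * M^p) + ENNReal.ofReal (c4 * M^p))) :=
          add_le_add hI1 hIc
      _ = ENNReal.ofReal (C0 * M^p) := by
          rw [← ENNReal.ofReal_add (mul_nonneg hc3.le hMp0) (mul_nonneg hc4.le hMp0),
            ← ENNReal.ofReal_add (mul_nonneg hc2.le hMp0)
              (add_nonneg (mul_nonneg hc3.le hMp0) (mul_nonneg hc4.le hMp0)),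
            ← ENNReal.ofReal_add (mul_nonneg hc1.le hMp0)
              (add_nonneg (mul_nonneg hc2.le hMp0)
                (add_nonneg (mul_nonneg hc3.le hMp0) (mul_nonneg hc4.le hMp0)))]
          congr 1
          rw [hC0d]
          ring
  -- final comparison with the stated right-hand side
  have hfin : 2^|γ1| * (C0 * M^p) ≤ (2^|γ1| * C0 * 2^|γ0-γ1|) * (1 + |x1| ^ b) ^ (γ0-γ1) := by
    have hs : (0:ℝ) ≤ |x1| ^ b := Real.rpow_nonneg (abs_nonneg x1) b
    have e1 : M^p = (max 1 (|x1| ^ b)) ^ (γ0-γ1) := by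
      rw [← maxpow (abs_nonneg x1) hb0.le,
        ← Real.rpow_mul (le_trans zero_le_one hM1)]
      congr 1
      rw [hpd, had, hccd, hbd]
      ring
    have e2 : (max 1 (|x1| ^ b)) ^ (γ0-γ1) ≤ 2^|γ0-γ1| * (1 + |x1| ^ b) ^ (γ0-γ1) := comp1 hs
    have hnn : (0:ℝ) ≤ 2^|γ1| * C0 := by positivity
    calc 2^|γ1| * (C0 * M^p) = (2^|γ1| * C0) * (max 1 (|x1| ^ b)) ^ (γ0-γ1) := by
          rw [e1]; ring
      _ ≤ (2^|γ1| * C0) * (2^|γ0-γ1| * (1 + |x1| ^ b) ^ (γ0-γ1)) :=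
          mul_le_mul_of_nonneg_left e2 hnn
      _ = (2^|γ1| * C0 * 2^|γ0-γ1|) * (1 + |x1| ^ b) ^ (γ0-γ1) := by ring
  -- assemble everything
  calc ∫⁻ y1 : ℝ, ENNReal.ofReal (min 1 (1 / |x1 - y1| ^ β) * (|y1| ^ a / (1 + |y1| ^ b) ^ γ1))
      ≤ ∫⁻ y, ENNReal.ofReal (2 ^ |γ1|) * ENNReal.ofReal (K (x1 - y) * G y) :=
        lintegral_mono step0
    _ = ENNReal.ofReal (2 ^ |γ1|) * ∫⁻ y, ENNReal.ofReal (K (x1 - y) * G y) :=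
        lintegral_const_mul' _ _ ENNReal.ofReal_ne_top
    _ ≤ ENNReal.ofReal (2 ^ |γ1|) * ENNReal.ofReal (C0 * M^p) := mul_le_mul_right Imain _
    _ = ENNReal.ofReal (2 ^ |γ1| * (C0 * M^p)) :=
        (ENNReal.ofReal_mul (Real.rpow_nonneg (by norm_num) _)).symm
    _ ≤ ENNReal.ofReal ((2^|γ1| * C0 * 2^|γ0-γ1|) * (1 + |x1| ^ b) ^ (γ0-γ1)) :=
        ENNReal.ofReal_le_ofReal hfin
end

section
/- Let $D=\mathbb{R}^d_+$ be the upper half-space ($x^1>0$), $d\geq 2$, $y\in D$, $r,\rho,\kappa_1>0$ with $r\leq c\rho$, and $-1<\kappa_0\leq 0$. Then $\int_{\{x\in D:\,|x-y|>\rho,\ x^1\leq r\}} \frac{(x^1)^{\kappa_0}}{|x-y|^{d+\kappa_1}}\,dx \leq C\,\rho^{-\kappa_1}r^{\kappa_0}$, where $C=C(d,\kappa_0,\kappa_1,c)$. -/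
open MeasureTheory Real Set Filter
open scoped ENNReal

lemma aux_pow_swap (n : ℕ) (s : ℝ) : ((2:ℝ)^n)^s = ((2:ℝ)^s)^n := by
  rw [← Real.rpow_natCast 2 n, ← Real.rpow_mul two_pos.le, mul_comm,
    Real.rpow_mul two_pos.le, Real.rpow_natCast]

lemma aux_term_eq (d : ℕ) (hd : 2 ≤ d) (κ0 κ1 r ρ : ℝ)
    (hr : 0 < r) (hρ : 0 < ρ) (j k : ℕ) :
    ((r / 2^(j+1)) ^ κ0 / (ρ * 2^k) ^ ((d:ℝ) + κ1)) * ((r / 2^(j+1)) * (4 * (ρ * 2^k))^(d-1))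
      = 4^(d-1) * r^(1+κ0) * ρ^(-(1+κ1)) * ((2:ℝ)^(-(1+κ0)))^(j+1) * ((2:ℝ)^(-(1+κ1)))^k := by
  have h2j : (0:ℝ) < 2 ^ (j+1) := by positivity
  have h2k : (0:ℝ) < 2 ^ k := by positivity
  set a : ℝ := r / 2^(j+1) with ha
  set b : ℝ := ρ * 2^k with hb
  have hapos : 0 < a := by positivity
  have hbpos : 0 < b := by positivity
  have e1 : a ^ κ0 * a = a ^ (1 + κ0) := by
    rw [add_comm, Real.rpow_add_one hapos.ne']
  have e2 : (4 * b)^(d-1) = 4^(d-1) * b^(d-1) := mul_pow _ _ _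
  have e3 : b ^ ((d:ℝ) + κ1) = b ^ (1 + κ1) * (b:ℝ)^(d-1) := by
    rw [← Real.rpow_natCast b (d-1), ← Real.rpow_add hbpos]
    congr 1
    rw [Nat.cast_sub (by omega), Nat.cast_one]
    ring
  have e4 : a ^ (1 + κ0) = r ^ (1+κ0) * ((2:ℝ)^(-(1+κ0)))^(j+1) := by
    rw [ha, Real.div_rpow hr.le h2j.le, aux_pow_swap, div_eq_mul_inv, ← inv_pow,
      ← Real.rpow_neg two_pos.le]
  have e5 : b ^ (1 + κ1) = ρ ^ (1+κ1) * (((2:ℝ)^(1+κ1)))^k := by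
    rw [hb, Real.mul_rpow hρ.le h2k.le, aux_pow_swap]
  have e6 : ρ ^ (-(1+κ1)) = (ρ ^ (1+κ1))⁻¹ := by
    rw [Real.rpow_neg hρ.le]
  have e7 : ((2:ℝ)^(-(1+κ1)))^k = (((2:ℝ)^(1+κ1))^k)⁻¹ := by
    rw [Real.rpow_neg two_pos.le, inv_pow]
  have hb1 : (0:ℝ) < b ^ (1+κ1) := Real.rpow_pos_of_pos hbpos _
  field_simp [e3]
  rw [e3]
  suffices h : a ^ κ0 * (a * (4 * b)^(d-1)) = 4^(d-1) * r^(1+κ0) * ρ^(-(1+κ1)) * ((2:ℝ)^(-(1+κ0)))^(j+1) * ((2:ℝ)^(-(1+κ1)))^k * (b ^ (1+κ1) * b^(d-1)) by linear_combination h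
  calc a ^ κ0 * (a * (4 * b)^(d-1)) = (a ^ κ0 * a) * (4^(d-1) * b^(d-1)) := by rw [e2]; ring
    _ = (r ^ (1+κ0) * ((2:ℝ)^(-(1+κ0)))^(j+1)) * (4^(d-1) * b^(d-1)) := by rw [e1, e4]
    _ = 4^(d-1) * r^(1+κ0) * ρ^(-(1+κ1)) * ((2:ℝ)^(-(1+κ0)))^(j+1) * ((2:ℝ)^(-(1+κ1)))^k
        * (b ^ (1+κ1) * b^(d-1)) := by
          rw [e5, e6, e7]
          field_simp

lemma aux_tsum (M q0 q1 : ℝ) (hM : 0 ≤ M) (hq0 : 0 ≤ q0) (hq00 : q0 < 1)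
    (hq1 : 0 ≤ q1) (hq11 : q1 < 1) :
    ∑' p : ℕ × ℕ, ENNReal.ofReal (M * q0 ^ (p.2 + 1) * q1 ^ p.1)
      = ENNReal.ofReal (M * (q0 * (1 - q0)⁻¹) * (1 - q1)⁻¹) := by
  have h1 : ∀ p : ℕ × ℕ, ENNReal.ofReal (M * q0 ^ (p.2+1) * q1 ^ p.1)
      = (ENNReal.ofReal M * (ENNReal.ofReal q1) ^ p.1) * (ENNReal.ofReal q0) ^ (p.2+1) := by
    intro p
    rw [ENNReal.ofReal_mul (by positivity), ENNReal.ofReal_mul hM,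
      ENNReal.ofReal_pow hq0, ENNReal.ofReal_pow hq1]
    ring
  simp only [h1]
  rw [ENNReal.tsum_prod (f := fun k j => ENNReal.ofReal M * ENNReal.ofReal q1 ^ k
    * ENNReal.ofReal q0 ^ (j+1))]
  have h2 : ∀ k : ℕ, ∑' j : ℕ, (ENNReal.ofReal M * (ENNReal.ofReal q1) ^ k)
      * (ENNReal.ofReal q0) ^ (j+1)
      = (ENNReal.ofReal M * (ENNReal.ofReal q1) ^ k)
        * (ENNReal.ofReal q0 * (1 - ENNReal.ofReal q0)⁻¹) := by
    intro k
    rw [ENNReal.tsum_mul_left, ENNReal.tsum_geometric_add_one]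
  simp only [h2]
  have h3 : ∀ k : ℕ, ENNReal.ofReal M * (ENNReal.ofReal q1) ^ k
      * (ENNReal.ofReal q0 * (1 - ENNReal.ofReal q0)⁻¹)
      = (ENNReal.ofReal M * (ENNReal.ofReal q0 * (1 - ENNReal.ofReal q0)⁻¹))
        * (ENNReal.ofReal q1) ^ k := fun k => by ring
  simp only [h3]
  rw [ENNReal.tsum_mul_left, ENNReal.tsum_geometric]
  have e0 : (1 : ℝ≥0∞) - ENNReal.ofReal q0 = ENNReal.ofReal (1 - q0) := by
    rw [ENNReal.ofReal_sub _ hq0, ENNReal.ofReal_one]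
  have e1 : (1 : ℝ≥0∞) - ENNReal.ofReal q1 = ENNReal.ofReal (1 - q1) := by
    rw [ENNReal.ofReal_sub _ hq1, ENNReal.ofReal_one]
  have hs0 : (0:ℝ) < 1 - q0 := by linarith
  have hs1 : (0:ℝ) < 1 - q1 := by linarith
  rw [e0, e1, ← ENNReal.ofReal_inv_of_pos hs0, ← ENNReal.ofReal_inv_of_pos hs1,
    ← ENNReal.ofReal_mul hq0, ← ENNReal.ofReal_mul hM,
    ← ENNReal.ofReal_mul (mul_nonneg hM (mul_nonneg hq0 (inv_nonneg.2 hs0.le)))]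

lemma aux_final (d : ℕ) (κ0 κ1 c q0 q1 r ρ : ℝ) (hq0 : 0 < q0) (hq00 : q0 < 1)
    (hq1 : 0 < q1) (hq11 : q1 < 1) (hr : 0 < r) (hρ : 0 < ρ) (hc : 0 < c) (hrρ : r ≤ c * ρ) :
    4 ^ (d-1) * r ^ (1+κ0) * ρ ^ (-(1+κ1)) * (q0 * (1 - q0)⁻¹) * (1 - q1)⁻¹
      ≤ (4 ^ (d-1) * c * (q0 / (1 - q0)) * (1 / (1 - q1))) * ρ ^ (-κ1) * r ^ κ0 := by
  have h1 : r ^ (1+κ0) = r * r ^ κ0 := by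
    rw [Real.rpow_add hr, Real.rpow_one]
  have h2 : ρ ^ (-(1+κ1)) = ρ⁻¹ * ρ ^ (-κ1) := by
    rw [show -(1+κ1) = (-1) + (-κ1) by ring, Real.rpow_add hρ, Real.rpow_neg_one]
  have key : r * ρ⁻¹ ≤ c := by
    rw [← div_eq_mul_inv, div_le_iff₀ hρ]; linarith
  have hpos : (0:ℝ) ≤ 4 ^ (d-1) * (q0 * (1-q0)⁻¹) * (1-q1)⁻¹ * ρ ^ (-κ1) * r ^ κ0 := by
    have : (0:ℝ) < 1 - q0 := by linarith
    have : (0:ℝ) < 1 - q1 := by linarith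
    positivity
  calc 4 ^ (d-1) * r ^ (1+κ0) * ρ ^ (-(1+κ1)) * (q0 * (1 - q0)⁻¹) * (1 - q1)⁻¹
      = (r * ρ⁻¹) * (4 ^ (d-1) * (q0 * (1-q0)⁻¹) * (1-q1)⁻¹ * ρ ^ (-κ1) * r ^ κ0) := by
        rw [h1, h2]; ring
    _ ≤ c * (4 ^ (d-1) * (q0 * (1-q0)⁻¹) * (1-q1)⁻¹ * ρ ^ (-κ1) * r ^ κ0) :=
        mul_le_mul_of_nonneg_right key hpos
    _ = (4 ^ (d-1) * c * (q0 / (1 - q0)) * (1 / (1 - q1))) * ρ ^ (-κ1) * r ^ κ0 := by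
        rw [div_eq_mul_inv, one_div]; ring

lemma aux_dyadic_low (r t : ℝ) (ht : 0 < t) (htr : t ≤ r) :
    ∃ j : ℕ, r / 2 ^ (j + 1) < t ∧ t ≤ r / 2 ^ j := by
  have hex : ∃ n : ℕ, r / 2 ^ n < t := by
    obtain ⟨n, hn⟩ := pow_unbounded_of_one_lt (r / t) (one_lt_two (α := ℝ))
    exact ⟨n, by rw [div_lt_iff₀ (by positivity)]; rw [div_lt_iff₀ ht] at hn; linarith⟩
  classical
  set m := Nat.find hex with hm
  have hspec : r / 2 ^ m < t := Nat.find_spec hex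
  have hm0 : m ≠ 0 := by
    intro h
    rw [h] at hspec; simp at hspec; linarith
  refine ⟨m - 1, ?_, ?_⟩
  · rw [show m - 1 + 1 = m from by omega]; exact hspec
  · have := Nat.find_min hex (m := m - 1) (by omega)
    linarith [not_lt.mp this]

lemma aux_dyadic_high (ρ s : ℝ) (hρ : 0 < ρ) (hs : ρ < s) :
    ∃ k : ℕ, ρ * 2 ^ k < s ∧ s ≤ ρ * 2 ^ (k + 1) := by
  have hex : ∃ n : ℕ, s ≤ ρ * 2 ^ n := by
    obtain ⟨n, hn⟩ := pow_unbounded_of_one_lt (s / ρ) (one_lt_two (α := ℝ))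
    exact ⟨n, by rw [div_lt_iff₀ hρ] at hn; nlinarith⟩
  classical
  set m := Nat.find hex with hm
  have hspec : s ≤ ρ * 2 ^ m := Nat.find_spec hex
  have hm0 : m ≠ 0 := by
    intro h; rw [h] at hspec; simp at hspec; linarith
  refine ⟨m - 1, ?_, ?_⟩
  · have := Nat.find_min hex (m := m - 1) (by omega)
    linarith [not_le.mp this]
  · rw [show m - 1 + 1 = m from by omega]; exact hspec

lemma aux_coord_abs_le_norm {d : ℕ} (x : EuclideanSpace ℝ (Fin d)) (i : Fin d) :
    |x i| ≤ ‖x‖ := by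
  rw [EuclideanSpace.norm_eq]
  have h1 : |x i| = Real.sqrt (‖x i‖ ^ 2) := by
    rw [Real.sqrt_sq_eq_abs, Real.norm_eq_abs, abs_abs]
  rw [h1]
  exact Real.sqrt_le_sqrt (Finset.single_le_sum (f := fun i => ‖x i‖ ^ 2)
    (fun i _ => sq_nonneg _) (Finset.mem_univ i))

lemma aux_volume_box {d : ℕ} (s : Fin d → Set ℝ) (hs : ∀ i, MeasurableSet (s i)) :
    volume {x : EuclideanSpace ℝ (Fin d) | ∀ i, x i ∈ s i} = ∏ i, volume (s i) := by
  have e := EuclideanSpace.volume_preserving_symm_measurableEquiv_toLp (Fin d)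
  have heq : {x : EuclideanSpace ℝ (Fin d) | ∀ i, x i ∈ s i}
      = (MeasurableEquiv.toLp 2 (Fin d → ℝ)).symm ⁻¹' (Set.pi Set.univ s) := by
    ext x; simp [Set.mem_pi]
  rw [heq, e.measure_preimage (MeasurableSet.univ_pi hs).nullMeasurableSet, volume_pi_pi]

/-- Lemma A.4(ii) on the half space `ℝ^d_+ = {x¹ > 0}`, `d ≥ 2`:
for `y ∈ ℝ^d_+`, `r ≤ cρ`, `-1 < κ₀ ≤ 0 < κ₁`,
`∫_{{x ∈ ℝ^d_+ : |x-y| > ρ, x¹ ≤ r}} (x¹)^{κ₀} |x-y|^{-d-κ₁} dx ≤ C ρ^{-κ₁} r^{κ₀}`. -/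
theorem stmt5 (d : ℕ) (hd : 2 ≤ d) (κ0 κ1 c : ℝ)
    (hκ0 : κ0 ∈ Set.Ioc (-1 : ℝ) 0) (hκ1 : 0 < κ1) (hc : 0 < c) :
    ∃ C : ℝ, 0 < C ∧
      ∀ y : EuclideanSpace ℝ (Fin d), 0 < y ⟨0, by omega⟩ →
        ∀ r ρ : ℝ, 0 < r → 0 < ρ → r ≤ c * ρ →
          (∫⁻ x in {x : EuclideanSpace ℝ (Fin d) |
                0 < x ⟨0, by omega⟩ ∧ ρ < ‖x - y‖ ∧ x ⟨0, by omega⟩ ≤ r},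
              ENNReal.ofReal ((x ⟨0, by omega⟩) ^ κ0 / ‖x - y‖ ^ ((d : ℝ) + κ1)))
            ≤ ENNReal.ofReal (C * ρ ^ (-κ1) * r ^ κ0) := by
  have hd0 : 0 < d := by omega
  set i0 : Fin d := ⟨0, by omega⟩ with hi0
  set q0 : ℝ := (2:ℝ) ^ (-(1+κ0)) with hq0def
  set q1 : ℝ := (2:ℝ) ^ (-(1+κ1)) with hq1def
  have hq0 : 0 < q0 := Real.rpow_pos_of_pos two_pos _
  have hq00 : q0 < 1 := Real.rpow_lt_one_of_one_lt_of_neg one_lt_two (by linarith [hκ0.1])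
  have hq1 : 0 < q1 := Real.rpow_pos_of_pos two_pos _
  have hq11 : q1 < 1 := Real.rpow_lt_one_of_one_lt_of_neg one_lt_two (by linarith)
  refine ⟨4 ^ (d-1) * c * (q0 / (1 - q0)) * (1 / (1 - q1)), ?_, ?_⟩
  · have hs0 : (0:ℝ) < 1 - q0 := by linarith
    have hs1 : (0:ℝ) < 1 - q1 := by linarith
    positivity
  intro y hy r ρ hr hρ hrρ
  set f : EuclideanSpace ℝ (Fin d) → ℝ≥0∞ :=
    fun x => ENNReal.ofReal ((x i0) ^ κ0 / ‖x - y‖ ^ ((d:ℝ) + κ1)) with hf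
  set A : Set (EuclideanSpace ℝ (Fin d)) :=
    {x | 0 < x i0 ∧ ρ < ‖x - y‖ ∧ x i0 ≤ r} with hA
  set S : ℕ × ℕ → Set (EuclideanSpace ℝ (Fin d)) := fun p =>
    {x | (r / 2^(p.2+1) < x i0 ∧ x i0 ≤ r / 2^p.2) ∧
      ρ * 2^p.1 < ‖x - y‖ ∧ ‖x - y‖ ≤ ρ * 2^(p.1+1)} with hS
  have hcover : A ⊆ ⋃ p : ℕ × ℕ, S p := by
    intro x hx
    obtain ⟨j, hj1, hj2⟩ := aux_dyadic_low r (x i0) hx.1 hx.2.2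
    obtain ⟨k, hk1, hk2⟩ := aux_dyadic_high ρ (‖x - y‖) hρ hx.2.1
    exact Set.mem_iUnion.2 ⟨(k, j), ⟨hj1, hj2⟩, hk1, hk2⟩
  set M : ℝ := 4^(d-1) * r^(1+κ0) * ρ^(-(1+κ1)) with hM
  have hMpos : 0 < M := by
    have := Real.rpow_pos_of_pos hr (1+κ0)
    have := Real.rpow_pos_of_pos hρ (-(1+κ1))
    positivity
  have hpiece : ∀ p : ℕ × ℕ, ∫⁻ x in S p, f x ≤ ENNReal.ofReal (M * q0^(p.2+1) * q1^(p.1)) := by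
    rintro ⟨k, j⟩
    have h2j : (0:ℝ) < 2 ^ (j+1) := by positivity
    have h2k : (0:ℝ) < 2 ^ k := by positivity
    have haL : (0:ℝ) < r / 2^(j+1) := by positivity
    have hbL : (0:ℝ) < ρ * 2^k := by positivity
    set K : ℝ := (r / 2^(j+1)) ^ κ0 / (ρ * 2^k) ^ ((d:ℝ) + κ1) with hK
    have hKnn : 0 ≤ K := by
      have := Real.rpow_pos_of_pos haL κ0
      have := Real.rpow_pos_of_pos hbL ((d:ℝ) + κ1)
      positivity
    set si : Fin d → Set ℝ := fun i =>
      if i = i0 then Set.Ioc (r/2^(j+1)) (r/2^j)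
      else Set.Icc (y i - ρ*2^(k+1)) (y i + ρ*2^(k+1)) with hsi
    have hsub : S (k, j) ⊆ {x | ∀ i, x i ∈ si i} := by
      intro x hx i
      obtain ⟨⟨hx1, hx2⟩, hx3, hx4⟩ := hx
      by_cases hi : i = i0
      · rw [hi]
        simp only [hsi, if_pos rfl]
        exact ⟨hx1, hx2⟩
      · simp only [hsi, if_neg hi]
        have habs : |x i - y i| ≤ ‖x - y‖ := by
          have := aux_coord_abs_le_norm (x - y) i
          rwa [PiLp.sub_apply] at this
        have h1 := (abs_le.1 habs).1
        have h2 := (abs_le.1 habs).2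
        constructor <;> [linarith; linarith]
    have hvol : volume {x : EuclideanSpace ℝ (Fin d) | ∀ i, x i ∈ si i}
        = ENNReal.ofReal (r/2^(j+1)) * (ENNReal.ofReal (4*(ρ*2^k)))^(d-1) := by
      rw [aux_volume_box si (fun i => by
        simp only [hsi]; split <;> [exact measurableSet_Ioc; exact measurableSet_Icc])]
      rw [← Finset.mul_prod_erase Finset.univ _ (Finset.mem_univ i0)]
      have hv0 : volume (si i0) = ENNReal.ofReal (r/2^(j+1)) := by
        simp only [hsi, if_pos rfl, Real.volume_Ioc]
        congr 1
        rw [pow_succ]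
        field_simp
        ring
      have hv1 : ∀ i ∈ Finset.univ.erase i0, volume (si i) = ENNReal.ofReal (4*(ρ*2^k)) := by
        intro i hi
        simp only [hsi, if_neg (Finset.ne_of_mem_erase hi), Real.volume_Icc]
        congr 1
        ring
      rw [hv0, Finset.prod_congr rfl hv1, Finset.prod_const,
        Finset.card_erase_of_mem (Finset.mem_univ i0), Finset.card_univ, Fintype.card_fin]
    calc ∫⁻ x in S (k, j), f x ≤ ∫⁻ _ in S (k, j), ENNReal.ofReal K := by
          refine setLIntegral_mono measurable_const (fun x hx => ?_)
          obtain ⟨⟨hx1, hx2⟩, hx3, hx4⟩ := hx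
          refine ENNReal.ofReal_le_ofReal ?_
          refine div_le_div₀ (by positivity) ?_ (Real.rpow_pos_of_pos hbL _) ?_
          · exact Real.rpow_le_rpow_of_nonpos haL hx1.le hκ0.2
          · exact Real.rpow_le_rpow hbL.le hx3.le (by positivity)
      _ = ENNReal.ofReal K * volume (S (k, j)) := setLIntegral_const _ _
      _ ≤ ENNReal.ofReal K * volume {x : EuclideanSpace ℝ (Fin d) | ∀ i, x i ∈ si i} := by
          exact mul_le_mul_right (measure_mono hsub) _
      _ = ENNReal.ofReal (M * q0^(j+1) * q1^k) := by
          rw [hvol, ← ENNReal.ofReal_pow (by positivity), ← ENNReal.ofReal_mul (by positivity),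
            ← ENNReal.ofReal_mul hKnn]
          congr 1
          rw [hK, hM, hq0def, hq1def]
          exact aux_term_eq d hd κ0 κ1 r ρ hr hρ j k
  calc ∫⁻ x in A, f x ≤ ∫⁻ x in ⋃ p : ℕ × ℕ, S p, f x := lintegral_mono_set hcover
    _ ≤ ∑' p : ℕ × ℕ, ∫⁻ x in S p, f x := lintegral_iUnion_le _ _
    _ ≤ ∑' p : ℕ × ℕ, ENNReal.ofReal (M * q0^(p.2+1) * q1^(p.1)) := ENNReal.tsum_le_tsum hpiece
    _ = ENNReal.ofReal (M * (q0 * (1 - q0)⁻¹) * (1 - q1)⁻¹) :=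
        aux_tsum M q0 q1 hMpos.le hq0.le hq00 hq1.le hq11
    _ ≤ ENNReal.ofReal ((4 ^ (d-1) * c * (q0 / (1 - q0)) * (1 / (1 - q1))) * ρ ^ (-κ1) * r ^ κ0) := by
        refine ENNReal.ofReal_le_ofReal ?_
        have := aux_final d κ0 κ1 c q0 q1 r ρ hq0 hq00 hq1 hq11 hr hρ hc hrρ
        rw [hM]
        calc 4^(d-1) * r^(1+κ0) * ρ^(-(1+κ1)) * (q0 * (1 - q0)⁻¹) * (1 - q1)⁻¹
            ≤ _ := this
end
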